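/- Let {X_n} be i.i.d. random variables, 0 < λ < ∞, and β₁ = sup{r ≥ 0 : lim_{x→∞} e^{r x^{1/λ}} P(X > x) = 0}. Then limsup_{n→∞} (max_{1≤k≤n} X_k)/(log n)^λ = β₁^{−λ} almost surely, with conventions 0^{−λ} = ∞ and ∞^{−λ} = 0. -/

import Mathlib

open MeasureTheory ProbabilityTheory Filter
open scoped ENNReal

/-- `log x = ln (e ∨ x)` as in the paper. -/
noncomputable def Log (x : ℝ) : ℝ := Real.log (max (Real.exp 1) x)

/-- `pmax X n ω = max_{1 ≤ k ≤ n} X_k(ω)` (indexed `0,…,n-1`), junk value at `n = 0`. -/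
noncomputable def pmax {Ω : Type*} (X : ℕ → Ω → ℝ) (n : ℕ) (ω : Ω) : ℝ :=
  if h : n = 0 then X 0 ω
  else (Finset.range n).sup' (Finset.nonempty_range_iff.mpr h) fun k => X k ω

lemma one_le_Log (x : ℝ) : 1 ≤ Log x := by
  have : Real.exp 1 ≤ max (Real.exp 1) x := le_max_left _ _
  calc (1:ℝ) = Real.log (Real.exp 1) := (Real.log_exp 1).symm
  _ ≤ Log x := Real.log_le_log (Real.exp_pos 1) this

lemma Log_pos (x : ℝ) : 0 < Log x := lt_of_lt_of_le one_pos (one_le_Log x)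

lemma Log_mono : Monotone Log := fun a b hab =>
  Real.log_le_log (lt_of_lt_of_le (Real.exp_pos 1) (le_max_left _ _))
    (max_le_max le_rfl hab)

lemma Log_le {x t : ℝ} (ht : 1 ≤ t) (hx : x ≤ Real.exp t) : Log x ≤ t := by
  have h1 : max (Real.exp 1) x ≤ Real.exp t :=
    max_le (Real.exp_le_exp.2 ht) hx
  calc Log x ≤ Real.log (Real.exp t) :=
        Real.log_le_log (lt_of_lt_of_le (Real.exp_pos 1) (le_max_left _ _)) h1
  _ = t := Real.log_exp t

lemma Log_nat_eq {n : ℕ} (hn : 3 ≤ n) : Log n = Real.log n := by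
  unfold Log
  rw [max_eq_right]
  calc Real.exp 1 ≤ 3 := by
        have := Real.exp_one_lt_d9
        linarith
  _ ≤ (n : ℝ) := by exact_mod_cast hn

lemma tendsto_Log_atTop : Tendsto (fun n : ℕ => Log n) atTop atTop := by
  have h : Tendsto (fun n : ℕ => Real.log n) atTop atTop :=
    Real.tendsto_log_atTop.comp tendsto_natCast_atTop_atTop
  refine tendsto_atTop_mono' atTop ?_ h
  filter_upwards [eventually_ge_atTop 3] with n hn
  rw [Log_nat_eq hn]

lemma tendsto_Log_rpow_atTop {lam : ℝ} (hlam : 0 < lam) :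
    Tendsto (fun n : ℕ => Log n ^ lam) atTop atTop :=
  (tendsto_rpow_atTop hlam).comp tendsto_Log_atTop

lemma le_pmax {Ω : Type*} (X : ℕ → Ω → ℝ) {k n : ℕ} (h : k < n) (ω : Ω) :
    X k ω ≤ pmax X n ω := by
  unfold pmax
  rw [dif_neg (show n ≠ 0 by omega)]
  exact Finset.le_sup' (fun k => X k ω) (Finset.mem_range.2 h)

lemma pmax_le {Ω : Type*} (X : ℕ → Ω → ℝ) {n : ℕ} (hn : n ≠ 0) {ω : Ω} {b : ℝ}
    (h : ∀ k < n, X k ω ≤ b) : pmax X n ω ≤ b := by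
  unfold pmax
  rw [dif_neg hn]
  exact Finset.sup'_le _ _ fun k hk => h k (Finset.mem_range.1 hk)

lemma limsup_pmax_le {Ω : Type*} (X : ℕ → Ω → ℝ) (ω : Ω) {lam c : ℝ}
    (hlam : 0 < lam) (hc : 0 < c) {N : ℕ} (hN : 1 ≤ N)
    (h : ∀ n ≥ N, X n ω ≤ c * Log n ^ lam) :
    limsup (fun n : ℕ => ENNReal.ofReal (pmax X n ω / Log n ^ lam)) atTop ≤
      ENNReal.ofReal c := by
  set b := pmax X N ω with hb
  have key : ∀ n ≥ N, pmax X n ω ≤ max b (c * Log n ^ lam) := by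
    intro n hn
    refine pmax_le X (by omega) ?_
    intro k hk
    rcases lt_or_ge k N with hkN | hkN
    · exact le_trans (le_pmax X hkN ω) (le_max_left _ _)
    · refine le_trans (h k hkN) (le_trans ?_ (le_max_right _ _))
      have h1 : Log (k : ℝ) ≤ Log (n : ℝ) := Log_mono (by exact_mod_cast hk.le)
      have h2 : Log (k : ℝ) ^ lam ≤ Log (n : ℝ) ^ lam :=
        Real.rpow_le_rpow (Log_pos _).le h1 hlam.le
      nlinarith
  have htend : Tendsto (fun n : ℕ => b / Log n ^ lam) atTop (nhds 0) :=
    tendsto_const_nhds.div_atTop (tendsto_Log_rpow_atTop hlam)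
  have hev : ∀ᶠ n : ℕ in atTop, b / Log n ^ lam < c :=
    htend.eventually (eventually_lt_nhds hc)
  refine limsup_le_of_le (by isBoundedDefault) ?_
  filter_upwards [hev, eventually_ge_atTop N] with n h1 h2
  refine ENNReal.ofReal_le_ofReal ?_
  have hL : (0:ℝ) < Log n ^ lam := Real.rpow_pos_of_pos (Log_pos _) _
  have hble : b ≤ c * Log n ^ lam := by
    rw [div_lt_iff₀ hL] at h1
    nlinarith
  have := key n h2
  rw [max_eq_right hble] at this
  rw [div_le_iff₀ hL]
  exact this

lemma le_limsup_pmax {Ω : Type*} (X : ℕ → Ω → ℝ) (ω : Ω) {lam c : ℝ}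
    (hlam : 0 < lam) (hc : 0 < c)
    (h : ∃ᶠ n in atTop, c * Log (n + 1 : ℕ) ^ lam < X n ω) :
    ENNReal.ofReal c ≤
      limsup (fun n : ℕ => ENNReal.ofReal (pmax X n ω / Log n ^ lam)) atTop := by
  refine le_limsup_of_frequently_le' ?_
  rw [frequently_atTop] at h ⊢
  intro a
  obtain ⟨n, hn, hX⟩ := h a
  refine ⟨n + 1, by omega, ?_⟩
  refine ENNReal.ofReal_le_ofReal ?_
  have hL : (0:ℝ) < Log (n+1 : ℕ) ^ lam := Real.rpow_pos_of_pos (Log_pos _) _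
  rw [le_div_iff₀ hL]
  calc c * Log (n+1:ℕ) ^ lam ≤ X n ω := hX.le
  _ ≤ pmax X (n+1) ω := le_pmax X (by omega) ω

lemma ennreal_rpow_anti {a b : ℝ≥0∞} {e : ℝ} (he : 0 < e) (h : a ≤ b) :
    b ^ (-e) ≤ a ^ (-e) := by
  rw [ENNReal.rpow_neg, ENNReal.rpow_neg, ENNReal.inv_le_inv]
  exact ENNReal.rpow_le_rpow h he.le

lemma ofreal_rpow_helper {lam c : ℝ} (hlam : 0 < lam) (hc : 0 < c) :
    (ENNReal.ofReal (c ^ (-(1/lam)))) ^ (-lam) = ENNReal.ofReal c := by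
  rw [ENNReal.ofReal_rpow_of_pos (Real.rpow_pos_of_pos hc _), ← Real.rpow_mul hc.le]
  congr 1
  rw [show -(1/lam) * -lam = 1 by field_simp, Real.rpow_one]

lemma step_upper {lam c : ℝ} (hlam : 0 < lam) (hc : 0 < c) {β : ℝ≥0∞}
    (h : β ^ (-lam) < ENNReal.ofReal c) : ENNReal.ofReal (c ^ (-(1/lam))) < β := by
  by_contra hle
  push_neg at hle
  have := ennreal_rpow_anti hlam hle
  rw [ofreal_rpow_helper hlam hc] at this
  exact absurd h (not_lt.2 this)

lemma step_lower {lam c : ℝ} (hlam : 0 < lam) (hc : 0 < c) {β : ℝ≥0∞}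
    (h : ENNReal.ofReal c < β ^ (-lam)) : β < ENNReal.ofReal (c ^ (-(1/lam))) := by
  by_contra hle
  push_neg at hle
  have := ennreal_rpow_anti hlam hle
  rw [ofreal_rpow_helper hlam hc] at this
  exact absurd h (not_lt.2 this)
section KeyU
open MeasureTheory ProbabilityTheory Filter
open scoped ENNReal

lemma key_upper_aux {Ω : Type*} [MeasurableSpace Ω] (μ : Measure Ω) [IsProbabilityMeasure μ]
    (X : ℕ → Ω → ℝ) (hmeas : ∀ n, Measurable (X n))
    (hident : ∀ n, IdentDistrib (X n) (X 0) μ μ)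
    {lam : ℝ} (hlam : 0 < lam) {c : ℝ} (hc : 0 < c) {r : ℝ}
    (hrT : Tendsto (fun x : ℝ => Real.exp (r * x ^ (1 / lam)) * (μ {ω | X 0 ω > x}).toReal)
          atTop (nhds 0))
    (hθ : 1 < r * c ^ (1 / lam)) :
    ∀ᵐ ω ∂μ,
      limsup (fun n : ℕ => ENNReal.ofReal (pmax X n ω / Log n ^ lam)) atTop ≤
        ENNReal.ofReal c := by
  set θ := r * c ^ (1 / lam) with hθdef
  set P : ℝ → ℝ := fun x => (μ {ω | X 0 ω > x}).toReal with hP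
  -- tail bound
  obtain ⟨x₀, hx₀⟩ : ∃ x₀ : ℝ, ∀ x ≥ x₀, P x ≤ Real.exp (-(r * x ^ (1 / lam))) := by
    have h1 : ∀ᶠ x : ℝ in atTop, Real.exp (r * x ^ (1 / lam)) * P x < 1 :=
      hrT.eventually (eventually_lt_nhds one_pos)
    obtain ⟨x₀, hx₀⟩ := eventually_atTop.1 h1
    refine ⟨x₀, fun x hx => ?_⟩
    have h2 := hx₀ x hx
    have h3 : (0:ℝ) < Real.exp (r * x ^ (1 / lam)) := Real.exp_pos _
    rw [Real.exp_neg]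
    rw [← lt_div_iff₀' h3] at h2
    rw [one_div] at h2
    exact h2.le
  -- choose N
  have htendN : Tendsto (fun n : ℕ => c * Log n ^ lam) atTop atTop :=
    (tendsto_Log_rpow_atTop hlam).const_mul_atTop hc
  obtain ⟨N₀, hN₀⟩ := eventually_atTop.1
    ((htendN.eventually_ge_atTop x₀).and (eventually_ge_atTop 3))
  set N := max N₀ 3 with hN
  -- events
  set B : ℕ → Set Ω := fun n => if n < N then (∅ : Set Ω)
    else X n ⁻¹' Set.Ioi (c * Log n ^ lam) with hB
  have hBbound : ∀ n, μ (B n) ≤ ENNReal.ofReal ((n : ℝ) ^ (-θ)) := by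
    intro n
    simp only [hB]
    by_cases hn : n < N
    · simp only [if_pos hn, measure_empty]
      exact zero_le
    · push_neg at hn
      have hn3 : 3 ≤ n := le_trans (le_max_right _ _) hn
      have hnN₀ : N₀ ≤ n := le_trans (le_max_left _ _) hn
      obtain ⟨hax₀, -⟩ := hN₀ n hnN₀
      rw [if_neg (not_lt.2 hn)]
      have hid : μ (X n ⁻¹' Set.Ioi (c * Log n ^ lam)) =
          μ (X 0 ⁻¹' Set.Ioi (c * Log n ^ lam)) :=
        (hident n).measure_mem_eq measurableSet_Ioi
      rw [hid]
      have heq : μ (X 0 ⁻¹' Set.Ioi (c * Log n ^ lam)) =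
          ENNReal.ofReal (P (c * Log n ^ lam)) := by
        rw [hP]
        exact (ENNReal.ofReal_toReal (measure_ne_top μ _)).symm
      rw [heq]
      refine ENNReal.ofReal_le_ofReal ?_
      have h4 := hx₀ _ hax₀
      refine h4.trans ?_
      have hLpos : (0:ℝ) < Log n := Log_pos _
      have hexp : (c * Log n ^ lam) ^ (1 / lam) = c ^ (1 / lam) * Log n := by
        rw [Real.mul_rpow hc.le (Real.rpow_nonneg hLpos.le _), one_div,
          Real.rpow_rpow_inv hLpos.le hlam.ne']
      rw [hexp]
      have hlog : Log n = Real.log n := Log_nat_eq hn3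
      have hnpos : (0:ℝ) < n := by positivity
      rw [Real.rpow_def_of_pos hnpos]
      rw [Real.exp_le_exp]
      rw [hlog]
      ring_nf
      exact le_of_eq (by rw [hθdef]; ring)
  -- summability
  have hsum : (∑' n, μ (B n)) ≠ ∞ := by
    have hsummable : Summable (fun n : ℕ => (n : ℝ) ^ (-θ)) :=
      Real.summable_nat_rpow.2 (by linarith)
    have h5 : (∑' n : ℕ, ENNReal.ofReal ((n : ℝ) ^ (-θ))) ≠ ∞ := by
      rw [← ENNReal.ofReal_tsum_of_nonneg (fun n => Real.rpow_nonneg (Nat.cast_nonneg n) _)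
        hsummable]
      exact ENNReal.ofReal_ne_top
    exact ne_top_of_le_ne_top h5 (ENNReal.tsum_le_tsum hBbound)
  have hae := ae_eventually_notMem (μ := μ) hsum
  filter_upwards [hae] with ω hω
  obtain ⟨N₁, hN₁⟩ := eventually_atTop.1 hω
  set N₂ := max N (max N₁ 1) with hN₂
  refine limsup_pmax_le X ω hlam hc (N := N₂) (le_trans (le_max_right N₁ 1) (le_max_right N _)) ?_
  intro n hn
  have h6 := hN₁ n (le_trans (le_trans (le_max_left N₁ 1) (le_max_right N _)) hn)
  simp only [hB] at h6
  rw [if_neg (not_lt.2 (le_trans (le_max_left _ _) hn))] at h6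
  simpa using h6

end KeyU
section KeyL
open MeasureTheory ProbabilityTheory Filter
open scoped ENNReal

lemma key_lower_aux {Ω : Type*} [MeasurableSpace Ω] (μ : Measure Ω) [IsProbabilityMeasure μ]
    (X : ℕ → Ω → ℝ) (hmeas : ∀ n, Measurable (X n))
    (hindep : iIndepFun X μ)
    (hident : ∀ n, IdentDistrib (X n) (X 0) μ μ)
    {lam : ℝ} (hlam : 0 < lam) {c : ℝ} (hc : 0 < c) {r : ℝ} (hr : 0 < r)
    (hnot : ¬ Tendsto (fun x : ℝ => Real.exp (r * x ^ (1 / lam)) * (μ {ω | X 0 ω > x}).toReal)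
          atTop (nhds 0))
    (hθ : r * c ^ (1 / lam) < 1) :
    ∀ᵐ ω ∂μ,
      ENNReal.ofReal c ≤
        limsup (fun n : ℕ => ENNReal.ofReal (pmax X n ω / Log n ^ lam)) atTop := by
  set θ := r * c ^ (1 / lam) with hθdef
  set P : ℝ → ℝ := fun x => (μ {ω | X 0 ω > x}).toReal with hP
  have hPnonneg : ∀ x, 0 ≤ P x := fun x => ENNReal.toReal_nonneg
  have hθ0 : 0 < θ := by
    have : (0:ℝ) < c ^ (1 / lam) := Real.rpow_pos_of_pos hc _
    positivity
  -- frequently large tail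
  obtain ⟨ε, hε, hfreq⟩ : ∃ ε > (0:ℝ), ∀ M : ℝ, ∃ x ≥ M,
      ε ≤ Real.exp (r * x ^ (1 / lam)) * P x := by
    rw [Metric.tendsto_atTop] at hnot
    push_neg at hnot
    obtain ⟨ε, hε, h⟩ := hnot
    refine ⟨ε, hε, fun M => ?_⟩
    obtain ⟨x, hx, hdist⟩ := h M
    refine ⟨x, hx, ?_⟩
    rwa [Real.dist_0_eq_abs, abs_of_nonneg (mul_nonneg (Real.exp_pos _).le (hPnonneg x))]
      at hdist
  -- events
  set B : ℕ → Set Ω := fun n => X n ⁻¹' Set.Ioi (c * Log (n + 1 : ℕ) ^ lam) with hB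
  have hBmeas : ∀ n, MeasurableSet (B n) := fun n => (hmeas n) measurableSet_Ioi
  have hBeq : ∀ n, μ (B n) = μ (X 0 ⁻¹' Set.Ioi (c * Log (n + 1 : ℕ) ^ lam)) := fun n =>
    (hident n).measure_mem_eq measurableSet_Ioi
  -- divergence
  have hdiv : (∑' n, μ (B n)) = ∞ := by
    by_contra hfin
    set F : ℕ → ℝ := fun n => P (c * Log (n + 1 : ℕ) ^ lam) with hF
    have hFnonneg : ∀ n, 0 ≤ F n := fun n => hPnonneg _
    have hFsummable : Summable F := by
      have := ENNReal.summable_toReal hfin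
      refine this.congr fun n => ?_
      rw [hBeq n]
      rfl
    set K := ∑' n, F n with hK
    have hK0 : 0 ≤ K := tsum_nonneg hFnonneg
    set T := Real.log (2 * (K + 1) / ε) / (1 - θ) with hT
    set A := max 1 (T + 1) with hA
    have hA1 : (1:ℝ) ≤ A := le_max_left _ _
    have hA0 : (0:ℝ) < A := lt_of_lt_of_le one_pos hA1
    obtain ⟨x, hxM, hxε⟩ := hfreq (c * A ^ lam)
    have hx0 : (0:ℝ) < x :=
      lt_of_lt_of_le (by positivity) hxM
    set t := (x / c) ^ (1 / lam) with ht
    have hxc0 : (0:ℝ) < x / c := div_pos hx0 hc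
    have htA : A ≤ t := by
      have h1 : A ^ lam ≤ x / c := (le_div_iff₀ hc).2 (by linarith [hxM])
      calc A = (A ^ lam) ^ (1/lam) := by
            rw [one_div, Real.rpow_rpow_inv hA0.le hlam.ne']
      _ ≤ t := Real.rpow_le_rpow (Real.rpow_nonneg hA0.le _) h1 (by positivity)
    have ht1 : (1:ℝ) ≤ t := le_trans hA1 htA
    have htT : T < t := lt_of_lt_of_le (by linarith [le_max_right 1 (T+1)]) htA
    have hxct : x = c * t ^ lam := by
      rw [ht, one_div, Real.rpow_inv_rpow hxc0.le hlam.ne', mul_div_cancel₀ _ hc.ne']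
    -- pointwise bound for n < N
    set N := ⌊Real.exp t⌋₊ with hNdef
    have hNge : Real.exp t - 1 ≤ (N : ℝ) := by
      have := Nat.sub_one_lt_floor (Real.exp t)
      linarith
    have hNle : (N : ℝ) ≤ Real.exp t := Nat.floor_le (Real.exp_pos t).le
    have hPx : ε * Real.exp (-(θ * t)) ≤ P x := by
      have hxe : x ^ (1 / lam) = c ^ (1 / lam) * t := by
        rw [hxct, Real.mul_rpow hc.le (Real.rpow_nonneg (by linarith) _), one_div,
          Real.rpow_rpow_inv (by linarith) hlam.ne']
      have h2 : r * x ^ (1 / lam) = θ * t := by rw [hxe, hθdef]; ring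
      rw [h2] at hxε
      have h3 : (0:ℝ) < Real.exp (θ * t) := Real.exp_pos _
      rw [Real.exp_neg, mul_comm ε, ← div_eq_inv_mul, div_le_iff₀ h3]
      linarith [hxε, mul_comm (P x) (Real.exp (θ * t))]
    have hkey : ∀ n < N, ε * Real.exp (-(θ * t)) ≤ F n := by
      intro n hn
      refine le_trans hPx ?_
      have h1 : ((n:ℝ) + 1) ≤ Real.exp t := by
        have : (n + 1 : ℕ) ≤ N := hn
        calc ((n:ℝ) + 1) = ((n + 1 : ℕ) : ℝ) := by push_cast; ring
        _ ≤ (N : ℝ) := by exact_mod_cast this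
        _ ≤ Real.exp t := hNle
      have h2 : Log ((n + 1 : ℕ) : ℝ) ≤ t := Log_le ht1 (by push_cast; linarith)
      have h3 : c * Log ((n + 1 : ℕ) : ℝ) ^ lam ≤ x := by
        rw [hxct]
        have := Real.rpow_le_rpow (Log_pos ((n + 1 : ℕ) : ℝ)).le h2 hlam.le
        nlinarith
      -- P antitone
      rw [hF, hP]
      refine ENNReal.toReal_mono (measure_ne_top μ _) (measure_mono ?_)
      intro ω hω
      simp only [Set.mem_setOf_eq] at hω ⊢
      linarith
    -- sum bound
    have hsumN : (N : ℝ) * (ε * Real.exp (-(θ * t))) ≤ K := by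
      calc (N : ℝ) * (ε * Real.exp (-(θ * t)))
          = ∑ _n ∈ Finset.range N, (ε * Real.exp (-(θ * t))) := by
            rw [Finset.sum_const, Finset.card_range, nsmul_eq_mul]
      _ ≤ ∑ n ∈ Finset.range N, F n :=
            Finset.sum_le_sum fun n hn => hkey n (Finset.mem_range.1 hn)
      _ ≤ K := Summable.sum_le_tsum _ (fun n _ => hFnonneg n) hFsummable
    -- contradiction
    have hexp2 : (2:ℝ) ≤ Real.exp t := by
      have h1 : Real.exp 1 ≤ Real.exp t := Real.exp_le_exp.2 ht1
      have := Real.exp_one_gt_d9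
      linarith
    have hbig : K + 1 ≤ (N : ℝ) * (ε * Real.exp (-(θ * t))) := by
      have h1 : Real.exp t / 2 ≤ (N : ℝ) := by linarith
      have h2 : (2 * (K + 1) / ε) ≤ Real.exp ((1 - θ) * t) := by
        have hpos : (0:ℝ) < 2 * (K + 1) / ε := by positivity
        have h3 : Real.log (2 * (K + 1) / ε) ≤ (1 - θ) * t := by
          have h4 : Real.log (2 * (K + 1) / ε) = (1 - θ) * T := by
            rw [hT, mul_div_cancel₀]
            linarith
          rw [h4]
          have h5 : (0:ℝ) < 1 - θ := by linarith
          nlinarith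
        calc (2 * (K + 1) / ε) = Real.exp (Real.log (2 * (K + 1) / ε)) :=
              (Real.exp_log hpos).symm
        _ ≤ Real.exp ((1 - θ) * t) := Real.exp_le_exp.2 h3
      have h6 : Real.exp t * Real.exp (-(θ * t)) = Real.exp ((1 - θ) * t) := by
        rw [← Real.exp_add]; ring_nf
      have h7 : (0:ℝ) < Real.exp (-(θ * t)) := Real.exp_pos _
      calc K + 1 = (ε / 2) * (2 * (K + 1) / ε) := by field_simp
      _ ≤ (ε / 2) * Real.exp ((1 - θ) * t) := by
            refine mul_le_mul_of_nonneg_left h2 (by positivity)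
      _ = (Real.exp t / 2) * (ε * Real.exp (-(θ * t))) := by
            rw [← h6]; ring
      _ ≤ (N : ℝ) * (ε * Real.exp (-(θ * t))) := by
            refine mul_le_mul_of_nonneg_right h1 (by positivity)
    linarith
  -- independence
  have hBindep : iIndepSet B μ := by
    rw [iIndepSet_iff_meas_biInter hBmeas]
    intro s
    exact hindep.measure_inter_preimage_eq_mul s
      (fun i _ => measurableSet_Ioi)
  have hone : μ (limsup B atTop) = 1 := measure_limsup_eq_one hBmeas hBindep hdiv
  have hae : ∀ᵐ ω ∂μ, ω ∈ limsup B atTop := by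
    have hms : MeasurableSet (limsup B atTop) :=
      MeasurableSet.measurableSet_limsup hBmeas
    rw [ae_iff]
    have : {ω | ¬ ω ∈ limsup B atTop} = (limsup B atTop)ᶜ := rfl
    rw [this, measure_compl hms (measure_ne_top μ _), hone, measure_univ]
    simp
  filter_upwards [hae] with ω hω
  refine le_limsup_pmax X ω hlam hc ?_
  rw [mem_limsup_iff_frequently_mem] at hω
  exact hω.mono fun n hn => hn
end KeyL
section Main
open MeasureTheory ProbabilityTheory Filter
open scoped ENNReal

theorem stmt17 {Ω : Type*} [MeasurableSpace Ω] (μ : Measure Ω) [IsProbabilityMeasure μ]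
    (X : ℕ → Ω → ℝ) (hmeas : ∀ n, Measurable (X n))
    (hindep : iIndepFun X μ)
    (hident : ∀ n, IdentDistrib (X n) (X 0) μ μ)
    (lam : ℝ) (hlam : 0 < lam) (β₁ : ℝ≥0∞)
    (hβ₁ : β₁ = sSup (ENNReal.ofReal '' {r : ℝ | 0 ≤ r ∧
        Tendsto (fun x : ℝ => Real.exp (r * x ^ (1 / lam)) * (μ {ω | X 0 ω > x}).toReal)
          atTop (nhds 0)})) :
    ∀ᵐ ω ∂μ,
      Filter.limsup (fun n : ℕ => ENNReal.ofReal (pmax X n ω / Log n ^ lam)) atTop =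
        β₁ ^ (-lam) := by

  set S : Set ℝ := {r : ℝ | 0 ≤ r ∧
      Tendsto (fun x : ℝ => Real.exp (r * x ^ (1 / lam)) * (μ {ω | X 0 ω > x}).toReal)
        atTop (nhds 0)} with hS
  set L : Ω → ℝ≥0∞ :=
    fun ω => Filter.limsup (fun n : ℕ => ENNReal.ofReal (pmax X n ω / Log n ^ lam)) atTop
    with hL
  have key_upper : ∀ c : ℝ, 0 < c → β₁ ^ (-lam) < ENNReal.ofReal c →
      ∀ᵐ ω ∂μ, L ω ≤ ENNReal.ofReal c := by
    intro c hc hcβ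
    have hstep : ENNReal.ofReal (c ^ (-(1/lam))) < β₁ := step_upper hlam hc hcβ
    rw [hβ₁, lt_sSup_iff] at hstep
    obtain ⟨y, hy, hlty⟩ := hstep
    obtain ⟨r, hrS, rfl⟩ := hy
    have hrgt : c ^ (-(1/lam)) < r :=
      (ENNReal.ofReal_lt_ofReal_iff_of_nonneg (Real.rpow_nonneg hc.le _)).1 hlty
    have hcp : (0:ℝ) < c ^ (1/lam) := Real.rpow_pos_of_pos hc _
    have hθ : 1 < r * c ^ (1/lam) := by
      have hneg : c ^ (-(1/lam)) = (c ^ (1/lam))⁻¹ := Real.rpow_neg hc.le _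
      calc (1:ℝ) = (c ^ (1/lam))⁻¹ * c ^ (1/lam) := (inv_mul_cancel₀ hcp.ne').symm
      _ < r * c ^ (1/lam) := by
          refine mul_lt_mul_of_pos_right ?_ hcp
          rw [← hneg]; exact hrgt
    exact key_upper_aux μ X hmeas hident hlam hc hrS.2 hθ
  have key_lower : ∀ c : ℝ, 0 < c → ENNReal.ofReal c < β₁ ^ (-lam) →
      ∀ᵐ ω ∂μ, ENNReal.ofReal c ≤ L ω := by
    intro c hc hcβ
    have hstep : β₁ < ENNReal.ofReal (c ^ (-(1/lam))) := step_lower hlam hc hcβ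
    obtain ⟨z, hz1, hz2⟩ := exists_between hstep
    have hzt : z ≠ ⊤ := ne_top_of_lt hz2
    set r := z.toReal with hr_def
    have hzr : ENNReal.ofReal r = z := ENNReal.ofReal_toReal hzt
    have hz0 : z ≠ 0 := (lt_of_le_of_lt (zero_le : 0 ≤ β₁) hz1).ne'
    have hr : 0 < r := ENNReal.toReal_pos hz0 hzt
    have hrc : r < c ^ (-(1/lam)) := by
      rw [← hzr] at hz2
      exact (ENNReal.ofReal_lt_ofReal_iff_of_nonneg hr.le).1 hz2
    have hcp : (0:ℝ) < c ^ (1/lam) := Real.rpow_pos_of_pos hc _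
    have hθ : r * c ^ (1/lam) < 1 := by
      have hneg : c ^ (-(1/lam)) = (c ^ (1/lam))⁻¹ := Real.rpow_neg hc.le _
      calc r * c ^ (1/lam) < (c ^ (1/lam))⁻¹ * c ^ (1/lam) := by
            refine mul_lt_mul_of_pos_right ?_ hcp
            rw [← hneg]; exact hrc
      _ = 1 := inv_mul_cancel₀ hcp.ne'
    have hrS : r ∉ S := by
      intro h
      have h1 : ENNReal.ofReal r ≤ β₁ := by
        rw [hβ₁]
        exact le_sSup ⟨r, h, rfl⟩
      rw [hzr] at h1
      exact absurd hz1 (not_lt.2 h1)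
    have hnot : ¬ Tendsto
        (fun x : ℝ => Real.exp (r * x ^ (1 / lam)) * (μ {ω | X 0 ω > x}).toReal)
        atTop (nhds 0) := fun hT => hrS ⟨hr.le, hT⟩
    exact key_lower_aux μ X hmeas hindep hident hlam hc hr hnot hθ
  -- assemble upper bound
  have hupper : ∀ᵐ ω ∂μ, L ω ≤ β₁ ^ (-lam) := by
    rcases eq_or_ne (β₁ ^ (-lam)) ⊤ with htop | htop
    · filter_upwards with ω
      rw [htop]; exact le_top
    · set t := (β₁ ^ (-lam)).toReal with htdef
      have ht : ENNReal.ofReal t = β₁ ^ (-lam) := ENNReal.ofReal_toReal htop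
      have ht0 : 0 ≤ t := ENNReal.toReal_nonneg
      have h1 : ∀ᵐ ω ∂μ, ∀ k : ℕ, L ω ≤ ENNReal.ofReal (t + 1/(k+1)) := by
        rw [ae_all_iff]
        intro k
        refine key_upper _ (by positivity) ?_
        rw [← ht]
        refine (ENNReal.ofReal_lt_ofReal_iff (by positivity)).2 ?_
        have : (0:ℝ) < 1/((k:ℝ)+1) := by positivity
        linarith
      filter_upwards [h1] with ω hω
      rw [← ht]
      have htnd : Tendsto (fun k : ℕ => ENNReal.ofReal (t + 1/(k+1))) atTop
          (nhds (ENNReal.ofReal t)) := by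
        refine (ENNReal.continuous_ofReal.tendsto t).comp ?_
        have h2 : Tendsto (fun k : ℕ => 1/((k:ℝ)+1)) atTop (nhds 0) :=
          tendsto_one_div_add_atTop_nhds_zero_nat
        have := tendsto_const_nhds (x := t) (f := atTop (α := ℕ)) |>.add h2
        simpa using this
      exact ge_of_tendsto' htnd hω
  -- assemble lower bound
  have hlower : ∀ᵐ ω ∂μ, β₁ ^ (-lam) ≤ L ω := by
    rcases eq_or_ne (β₁ ^ (-lam)) 0 with h0 | h0
    · filter_upwards with ω
      rw [h0]; exact zero_le
    rcases eq_or_ne (β₁ ^ (-lam)) ⊤ with htop | htop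
    · have h1 : ∀ᵐ ω ∂μ, ∀ k : ℕ, ENNReal.ofReal (k+1) ≤ L ω := by
        rw [ae_all_iff]
        intro k
        refine key_lower _ (by positivity) ?_
        rw [htop]
        exact ENNReal.ofReal_lt_top
      filter_upwards [h1] with ω hω
      rw [htop]
      by_contra hlt
      push_neg at hlt
      have hLne : L ω ≠ ⊤ := hlt.ne
      have h2 := hω ⌈(L ω).toReal⌉₊
      rw [ENNReal.ofReal_le_iff_le_toReal hLne] at h2
      have h3 : (L ω).toReal ≤ (⌈(L ω).toReal⌉₊ : ℝ) := Nat.le_ceil _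
      linarith
    · set t := (β₁ ^ (-lam)).toReal with htdef
      have ht : ENNReal.ofReal t = β₁ ^ (-lam) := ENNReal.ofReal_toReal htop
      have ht0 : 0 < t := ENNReal.toReal_pos h0 htop
      have h1 : ∀ᵐ ω ∂μ, ∀ k : ℕ, ENNReal.ofReal (t - t/(k+2)) ≤ L ω := by
        rw [ae_all_iff]
        intro k
        have hck : 0 < t - t/(k+2) := by
          have h2 : t/((k:ℝ)+2) < t := div_lt_self ht0 (by have h9 : (0:ℝ) ≤ (k:ℝ) := Nat.cast_nonneg k; linarith)
          linarith
        refine key_lower _ hck ?_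
        rw [← ht]
        refine (ENNReal.ofReal_lt_ofReal_iff ht0).2 ?_
        have : (0:ℝ) < t/((k:ℝ)+2) := by positivity
        linarith
      filter_upwards [h1] with ω hω
      rw [← ht]
      have htnd : Tendsto (fun k : ℕ => ENNReal.ofReal (t - t/(k+2))) atTop
          (nhds (ENNReal.ofReal t)) := by
        refine (ENNReal.continuous_ofReal.tendsto t).comp ?_
        have h2 : Tendsto (fun k : ℕ => t/((k:ℝ)+2)) atTop (nhds 0) := by
          refine Tendsto.div_atTop tendsto_const_nhds ?_
          have := tendsto_natCast_atTop_atTop (R := ℝ)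
          exact tendsto_atTop_add_const_right _ 2 this
        have := tendsto_const_nhds (x := t) (f := atTop (α := ℕ)) |>.sub h2
        simpa using this
      exact le_of_tendsto' htnd hω
  filter_upwards [hupper, hlower] with ω h1 h2
  exact le_antisymm h1 h2
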